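/- If X is an Exponential random variable with rate 1, then the variance of ln X equals π²/6. -/

import Mathlib

open MeasureTheory ProbabilityTheory Real

section aux
open Set Filter Topology Asymptotics
open scoped NNReal ENNReal


noncomputable def G1 (x : ℝ) : ℝ := (deriv Complex.Gamma x).re
noncomputable def G2 (x : ℝ) : ℝ := (deriv (deriv Complex.Gamma) x).re

lemma diffAt_cGamma {z : ℂ} (hz : 0 < z.re) : DifferentiableAt ℂ Complex.Gamma z := by
  refine Complex.differentiableAt_Gamma z (fun m => ?_)
  intro h; rw [h] at hz; simp at hz
  have : (0:ℝ) ≤ m := m.cast_nonneg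
  linarith

lemma diffAt_deriv_cGamma {z : ℂ} (hz : 0 < z.re) :
    DifferentiableAt ℂ (deriv Complex.Gamma) z := by
  have hopen : IsOpen {w : ℂ | 0 < w.re} := isOpen_lt continuous_const Complex.continuous_re
  have hdo : DifferentiableOn ℂ Complex.Gamma {w : ℂ | 0 < w.re} :=
    fun w hw => (diffAt_cGamma hw).differentiableWithinAt
  have han : AnalyticOnNhd ℂ Complex.Gamma {w : ℂ | 0 < w.re} := hdo.analyticOnNhd hopen
  have hfd : AnalyticOnNhd ℂ (fderiv ℂ Complex.Gamma) {w : ℂ | 0 < w.re} := han.fderiv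
  have h1 : DifferentiableAt ℂ (fun w => fderiv ℂ Complex.Gamma w 1) z :=
    (hfd z hz).differentiableAt.clm_apply (differentiableAt_const _)
  have : (fun w => fderiv ℂ Complex.Gamma w 1) = deriv Complex.Gamma := by
    funext w; exact fderiv_apply_one_eq_deriv
  rwa [this] at h1

lemma realGamma_eq : (fun x : ℝ => (Complex.Gamma x).re) = Real.Gamma := by
  funext y; rw [Complex.Gamma_ofReal, Complex.ofReal_re]

lemma hasDerivAt_G1 {x : ℝ} (hx : 0 < x) : HasDerivAt Real.Gamma (G1 x) x := by
  have h := (diffAt_cGamma (z := (x:ℂ)) (by simpa using hx)).hasDerivAt.real_of_complex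
  rwa [realGamma_eq] at h

lemma hasDerivAt_G2 {x : ℝ} (hx : 0 < x) : HasDerivAt G1 (G2 x) x :=
  (diffAt_deriv_cGamma (by simpa using hx)).hasDerivAt.real_of_complex

/-- digamma -/
noncomputable def psi (x : ℝ) : ℝ := G1 x / Real.Gamma x
/-- trigamma -/
noncomputable def psi' (x : ℝ) : ℝ :=
  (G2 x * Real.Gamma x - G1 x * G1 x) / (Real.Gamma x) ^ 2

lemma hasDerivAt_logGamma {x : ℝ} (hx : 0 < x) :
    HasDerivAt (fun y => Real.log (Real.Gamma y)) (psi x) x :=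
  (hasDerivAt_G1 hx).log (Real.Gamma_pos_of_pos hx).ne'

lemma hasDerivAt_psi {x : ℝ} (hx : 0 < x) : HasDerivAt psi (psi' x) x :=
  (hasDerivAt_G2 hx).div (hasDerivAt_G1 hx) (Real.Gamma_pos_of_pos hx).ne'

local notation "γ" => Real.eulerMascheroniConstant

lemma G1_one : G1 1 = -γ :=
  (hasDerivAt_G1 one_pos).unique Real.hasDerivAt_Gamma_one

lemma psi_one : psi 1 = -γ := by
  simp [psi, G1_one, Real.Gamma_one]

lemma G2_one : G2 1 = psi' 1 + γ ^ 2 := by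
  simp [psi', Real.Gamma_one, G1_one]; ring

-- reflection, first derivative
lemma psi_reflect {y : ℝ} (hy : y ∈ Ioo (0:ℝ) 1) :
    psi y - psi (1 - y) = -(π * Real.cos (π * y) / Real.sin (π * y)) := by
  obtain ⟨hy0, hy1⟩ := hy
  have hsin : ∀ z ∈ Ioo (0:ℝ) 1, 0 < Real.sin (π * z) := fun z hz =>
    Real.sin_pos_of_pos_of_lt_pi (mul_pos Real.pi_pos hz.1)
      (by nlinarith [Real.pi_pos, hz.1, hz.2])
  -- the identity of functions on Ioo 0 1
  have heq : ∀ z ∈ Ioo (0:ℝ) 1,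
      Real.log (Real.Gamma z) + Real.log (Real.Gamma (1 - z))
        = Real.log π - Real.log (Real.sin (π * z)) := by
    intro z hz
    rw [← Real.log_mul (Real.Gamma_pos_of_pos hz.1).ne'
        (Real.Gamma_pos_of_pos (by linarith [hz.2])).ne',
      Real.Gamma_mul_Gamma_one_sub, Real.log_div Real.pi_pos.ne' (hsin z hz).ne']
  -- LHS derivative
  have hL : HasDerivAt (fun z => Real.log (Real.Gamma z) + Real.log (Real.Gamma (1 - z)))
      (psi y - psi (1 - y)) y := by
    have h2 : HasDerivAt (fun z : ℝ => Real.log (Real.Gamma (1 - z))) (-psi (1 - y)) y := by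
      exact HasDerivAt.comp_const_sub 1 y (hasDerivAt_logGamma (by linarith))
    simpa [sub_eq_add_neg] using (hasDerivAt_logGamma hy0).fun_add h2
  -- RHS derivative
  have hR : HasDerivAt (fun z => Real.log π - Real.log (Real.sin (π * z)))
      (-(π * Real.cos (π * y) / Real.sin (π * y))) y := by
    have hs : HasDerivAt (fun z : ℝ => Real.sin (π * z)) (Real.cos (π * y) * π) y := by
      simpa [Function.comp_def] using (Real.hasDerivAt_sin (π * y)).comp y ((hasDerivAt_id y).const_mul π)
    have := (hs.log (hsin y ⟨hy0, hy1⟩).ne').const_sub (Real.log π)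
    refine this.congr_deriv ?_
    field_simp
  have : psi y - psi (1 - y) = -(π * Real.cos (π * y) / Real.sin (π * y)) := by
    have hLc : HasDerivAt (fun z => Real.log π - Real.log (Real.sin (π * z)))
        (psi y - psi (1 - y)) y := by
      refine hL.congr_of_eventuallyEq ?_
      filter_upwards [Ioo_mem_nhds hy0 hy1] with z hz
      exact (heq z hz).symm
    exact hLc.unique hR
  exact this

lemma psi'_half : psi' (1/2) = π ^ 2 / 2 := by
  -- differentiate psi_reflect at 1/2
  have hmem : (1/2 : ℝ) ∈ Ioo (0:ℝ) 1 := by norm_num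
  have hL : HasDerivAt (fun z : ℝ => psi z - psi (1 - z)) (psi' (1/2) + psi' (1/2)) (1/2) := by
    have h2 : HasDerivAt (fun z : ℝ => psi (1 - z)) (-psi' (1/2)) (1/2) := by
      have := HasDerivAt.comp_const_sub 1 (1/2:ℝ) (hasDerivAt_psi (x := 1 - 1/2) (by norm_num))
      norm_num at this ⊢
      exact this
    have := (hasDerivAt_psi (x := (1/2:ℝ)) (by norm_num)).fun_sub h2
    simpa [sub_neg_eq_add] using this
  have hR : HasDerivAt (fun z : ℝ => -(π * Real.cos (π * z) / Real.sin (π * z)))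
      (π ^ 2) (1/2) := by
    have hc : HasDerivAt (fun z : ℝ => Real.cos (π * z)) (-Real.sin (π * (1/2)) * π) (1/2) := by
      simpa [Function.comp_def] using (Real.hasDerivAt_cos (π * (1/2))).comp (1/2:ℝ)
        ((hasDerivAt_id (1/2:ℝ)).const_mul π)
    have hs : HasDerivAt (fun z : ℝ => Real.sin (π * z)) (Real.cos (π * (1/2)) * π) (1/2) := by
      simpa [Function.comp_def] using (Real.hasDerivAt_sin (π * (1/2))).comp (1/2:ℝ)
        ((hasDerivAt_id (1/2:ℝ)).const_mul π)
    have hsin1 : Real.sin (π * (1/2)) = 1 := by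
      rw [show π * (1/2) = π/2 by ring, Real.sin_pi_div_two]
    have hcos0 : Real.cos (π * (1/2)) = 0 := by
      rw [show π * (1/2) = π/2 by ring, Real.cos_pi_div_two]
    have h := ((hc.fun_div hs (by rw [hsin1]; norm_num)).const_mul π).fun_neg
    have heq : (fun z : ℝ => -(π * Real.cos (π * z) / Real.sin (π * z)))
        = fun x : ℝ => -(π * (Real.cos (π * x) / Real.sin (π * x))) := by
      funext z; ring
    rw [heq]
    refine h.congr_deriv ?_
    rw [hsin1, hcos0]
    ring
  have hLc : HasDerivAt (fun z : ℝ => -(π * Real.cos (π * z) / Real.sin (π * z)))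
      (psi' (1/2) + psi' (1/2)) (1/2) := by
    refine hL.congr_of_eventuallyEq ?_
    filter_upwards [Ioo_mem_nhds hmem.1 hmem.2] with z hz
    exact (psi_reflect hz).symm
  have h := hLc.unique hR
  linarith

lemma psi_dup {y : ℝ} (hy : 0 < y) :
    psi y + psi (y + 1/2) = 2 * psi (2 * y) - 2 * Real.log 2 := by
  have heq : ∀ z ∈ Ioi (0:ℝ),
      Real.log (Real.Gamma z) + Real.log (Real.Gamma (z + 1/2))
        = Real.log (Real.Gamma (2 * z)) + (1 - 2*z) * Real.log 2 + Real.log (Real.sqrt π) := by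
    intro z hz
    rw [mem_Ioi] at hz
    have h1 := Real.Gamma_mul_Gamma_add_half z
    have := congrArg Real.log h1
    rw [Real.log_mul (Real.Gamma_pos_of_pos hz).ne'
        (Real.Gamma_pos_of_pos (by linarith)).ne'] at this
    rw [this, Real.log_mul (by positivity) (Real.sqrt_pos.mpr Real.pi_pos).ne',
      Real.log_mul (Real.Gamma_pos_of_pos (by linarith)).ne' (by positivity),
      Real.log_rpow (by norm_num)]
  have hL : HasDerivAt (fun z => Real.log (Real.Gamma z) + Real.log (Real.Gamma (z + 1/2)))
      (psi y + psi (y + 1/2)) y := by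
    have h2 : HasDerivAt (fun z : ℝ => Real.log (Real.Gamma (z + 1/2))) (psi (y + 1/2)) y := by
      exact HasDerivAt.comp_add_const y (1/2) (hasDerivAt_logGamma (by linarith))
    exact (hasDerivAt_logGamma hy).add h2
  have hR : HasDerivAt (fun z => Real.log (Real.Gamma (2*z)) + (1 - 2*z) * Real.log 2
      + Real.log (Real.sqrt π)) (2 * psi (2*y) - 2 * Real.log 2) y := by
    have h1 : HasDerivAt (fun z : ℝ => Real.log (Real.Gamma (2*z))) (2 * psi (2*y)) y := by
      have hin : HasDerivAt (fun z : ℝ => 2 * z) 2 y := by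
        simpa using (hasDerivAt_id y).const_mul 2
      have := (hasDerivAt_logGamma (x := 2*y) (by linarith)).comp y hin
      simpa [Function.comp_def, mul_comm] using this
    have h2 : HasDerivAt (fun z : ℝ => (1 - 2*z) * Real.log 2) (-2 * Real.log 2) y := by
      have : HasDerivAt (fun z : ℝ => 1 - 2*z) (-2) y := by
        simpa using ((hasDerivAt_id y).const_mul 2).const_sub 1
      simpa using this.mul_const (Real.log 2)
    have := (h1.fun_add h2).add_const (Real.log (Real.sqrt π))
    refine this.congr_deriv ?_
    ring
  have hLc : HasDerivAt (fun z => Real.log (Real.Gamma (2*z)) + (1 - 2*z) * Real.log 2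
      + Real.log (Real.sqrt π)) (psi y + psi (y + 1/2)) y := by
    refine hL.congr_of_eventuallyEq ?_
    filter_upwards [Ioi_mem_nhds hy] with z hz
    exact (heq z hz).symm
  exact hLc.unique hR

lemma psi'_one : psi' 1 = π ^ 2 / 6 := by
  -- differentiate psi_dup at 1/2
  have hL : HasDerivAt (fun z : ℝ => psi z + psi (z + 1/2)) (psi' (1/2) + psi' 1) (1/2) := by
    have h2 : HasDerivAt (fun z : ℝ => psi (z + 1/2)) (psi' 1) (1/2) := by
      have := HasDerivAt.comp_add_const (1/2:ℝ) (1/2) (hasDerivAt_psi (x := (1/2:ℝ) + 1/2) (by norm_num))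
      norm_num at this ⊢
      exact this
    exact (hasDerivAt_psi (by norm_num)).add h2
  have hR : HasDerivAt (fun z : ℝ => 2 * psi (2*z) - 2 * Real.log 2) (4 * psi' 1) (1/2) := by
    have h1 : HasDerivAt (fun z : ℝ => psi (2*z)) (2 * psi' 1) (1/2) := by
      have hin : HasDerivAt (fun z : ℝ => 2 * z) 2 (1/2:ℝ) := by
        simpa using (hasDerivAt_id (1/2:ℝ)).const_mul 2
      have := (hasDerivAt_psi (x := 2 * (1/2:ℝ)) (by norm_num)).comp (1/2:ℝ) hin
      norm_num at this ⊢
      simpa [Function.comp_def, mul_comm] using this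
    have := (h1.const_mul 2).sub_const (2 * Real.log 2)
    refine this.congr_deriv ?_
    ring
  have hLc : HasDerivAt (fun z : ℝ => 2 * psi (2*z) - 2 * Real.log 2)
      (psi' (1/2) + psi' 1) (1/2) := by
    refine hL.congr_of_eventuallyEq ?_
    filter_upwards [Ioi_mem_nhds (by norm_num : (0:ℝ) < 1/2)] with z hz
    exact (psi_dup hz).symm
  have h := hLc.unique hR
  rw [psi'_half] at h
  linarith

noncomputable def fC : ℝ → ℂ := fun t => (Real.exp (-t) : ℂ)
noncomputable def gC : ℝ → ℂ := fun t => Real.log t • fC t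
noncomputable def hC : ℝ → ℂ := fun t => Real.log t • gC t

lemma fC_loc : LocallyIntegrableOn fC (Ioi 0) := by
  refine (Continuous.continuousOn ?_).locallyIntegrableOn measurableSet_Ioi
  exact Complex.continuous_ofReal.comp (Real.continuous_exp.comp continuous_neg)

lemma fC_top : fC =O[atTop] (fun t : ℝ => t ^ (-3 : ℝ)) := by
  rw [← isBigO_norm_left]
  simp_rw [fC, Complex.norm_real, isBigO_norm_left]
  simpa only [neg_one_mul] using (isLittleO_exp_neg_mul_rpow_atTop zero_lt_one _).isBigO

lemma fC_bot : fC =O[𝓝[>] (0:ℝ)] (fun t : ℝ => t ^ (-0 : ℝ)) := by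
  simp_rw [neg_zero, Real.rpow_zero]
  refine isBigO_const_of_tendsto (?_ : Tendsto _ _ (𝓝 (1 : ℂ))) one_ne_zero
  rw [(by simp : (1 : ℂ) = Real.exp (-0))]
  exact (Complex.continuous_ofReal.comp (Real.continuous_exp.comp continuous_neg)).continuousWithinAt

lemma gC_loc : LocallyIntegrableOn gC (Ioi 0) := by
  refine (ContinuousOn.locallyIntegrableOn ?_ measurableSet_Ioi)
  refine ContinuousOn.smul (fun t ht => (Real.continuousAt_log (ne_of_gt ht)).continuousWithinAt) ?_
  exact (Complex.continuous_ofReal.comp (Real.continuous_exp.comp continuous_neg)).continuousOn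

lemma gC_top : gC =O[atTop] (fun t : ℝ => t ^ (-2 : ℝ)) :=
  isBigO_rpow_top_log_smul (by norm_num) fC_top

lemma gC_bot : gC =O[𝓝[>] (0:ℝ)] (fun t : ℝ => t ^ (-(1/2) : ℝ)) :=
  isBigO_rpow_zero_log_smul (by norm_num) fC_bot

lemma mellin_fC_hasDeriv {s : ℂ} (h0 : 0 < s.re) (h3 : s.re < 3) :
    MellinConvergent gC s ∧ HasDerivAt (mellin fC) (mellin gC s) s :=
  mellin_hasDerivAt_of_isBigO_rpow fC_loc fC_top h3 fC_bot h0

lemma mellin_gC_hasDeriv :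
    MellinConvergent hC 1 ∧ HasDerivAt (mellin gC) (mellin hC 1) 1 :=
  mellin_hasDerivAt_of_isBigO_rpow gC_loc gC_top (by norm_num) gC_bot (by norm_num)

lemma isOpen_S : IsOpen {z : ℂ | 0 < z.re ∧ z.re < 3} :=
  (isOpen_lt continuous_const Complex.continuous_re).inter
    (isOpen_lt Complex.continuous_re continuous_const)

lemma gamma_eq_mellin_fC : ∀ z ∈ {z : ℂ | 0 < z.re ∧ z.re < 3}, Complex.Gamma z = mellin fC z := by
  intro z hz
  rw [Complex.Gamma_eq_integral hz.1, Complex.GammaIntegral_eq_mellin]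
  rfl

lemma deriv_cGamma_eq : ∀ z ∈ {z : ℂ | 0 < z.re ∧ z.re < 3},
    deriv Complex.Gamma z = mellin gC z := by
  intro z hz
  have h1 : Complex.Gamma =ᶠ[𝓝 z] mellin fC :=
    Filter.eventuallyEq_of_mem (isOpen_S.mem_nhds hz) gamma_eq_mellin_fC
  rw [h1.deriv_eq]
  exact ((mellin_fC_hasDeriv hz.1 hz.2).2).deriv

lemma hasDerivAt_deriv_cGamma : HasDerivAt (deriv Complex.Gamma) (mellin hC 1) 1 := by
  refine (mellin_gC_hasDeriv.2).congr_of_eventuallyEq ?_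
  exact Filter.eventuallyEq_of_mem (isOpen_S.mem_nhds (by norm_num)) deriv_cGamma_eq

lemma mellin_gC_one : mellin gC 1 = ((∫ t in Ioi (0:ℝ), Real.log t * Real.exp (-t) : ℝ) : ℂ) := by
  have h1 : mellin gC 1 = ∫ t in Ioi (0:ℝ), ((Real.log t * Real.exp (-t) : ℝ) : ℂ) := by
    rw [mellin]
    congr 1; funext t
    simp only [gC, fC, Complex.real_smul, sub_self, Complex.cpow_zero, one_smul,
      Complex.ofReal_mul]
  rw [h1]; exact integral_ofReal

lemma mellin_hC_one :
    mellin hC 1 = ((∫ t in Ioi (0:ℝ), (Real.log t) ^ 2 * Real.exp (-t) : ℝ) : ℂ) := by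
  have h1 : mellin hC 1 = ∫ t in Ioi (0:ℝ), (((Real.log t) ^ 2 * Real.exp (-t) : ℝ) : ℂ) := by
    rw [mellin]
    congr 1; funext t
    simp only [hC, gC, fC, Complex.real_smul, sub_self, Complex.cpow_zero, one_smul,
      Complex.ofReal_mul, Complex.ofReal_pow]
    ring
  rw [h1]; exact integral_ofReal

lemma integrableOn_log_exp : IntegrableOn (fun t => Real.log t * Real.exp (-t)) (Ioi (0:ℝ)) := by
  have h := (mellin_fC_hasDeriv (s := 1) (by norm_num) (by norm_num)).1
  unfold MellinConvergent at h
  have h2 : IntegrableOn (fun t : ℝ => ((Real.log t * Real.exp (-t) : ℝ) : ℂ)) (Ioi 0) := by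
    refine h.congr (Eventually.of_forall fun t => ?_)
    simp only [gC, fC, Complex.real_smul, sub_self, Complex.cpow_zero, one_smul,
      Complex.ofReal_mul]
  exact h2.re.congr (Eventually.of_forall fun t => by simp only [RCLike.re_to_complex, Complex.ofReal_re])

lemma integrableOn_logsq_exp :
    IntegrableOn (fun t => (Real.log t) ^ 2 * Real.exp (-t)) (Ioi (0:ℝ)) := by
  have h := mellin_gC_hasDeriv.1
  unfold MellinConvergent at h
  have h2 : IntegrableOn (fun t : ℝ => (((Real.log t) ^ 2 * Real.exp (-t) : ℝ) : ℂ)) (Ioi 0) := by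
    refine h.congr (Eventually.of_forall fun t => ?_)
    simp only [hC, gC, fC, Complex.real_smul, sub_self, Complex.cpow_zero, one_smul,
      Complex.ofReal_mul, Complex.ofReal_pow]
    ring
  exact h2.re.congr (Eventually.of_forall fun t => by simp only [RCLike.re_to_complex, Complex.ofReal_re])

lemma integral_log_exp : ∫ t in Ioi (0:ℝ), Real.log t * Real.exp (-t) = -γ := by
  have h1 : deriv Complex.Gamma 1 = mellin gC 1 :=
    deriv_cGamma_eq 1 (by norm_num)
  have h2 : ((∫ t in Ioi (0:ℝ), Real.log t * Real.exp (-t) : ℝ) : ℂ).re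
      = (deriv Complex.Gamma 1).re := by rw [h1, mellin_gC_one]
  rw [Complex.ofReal_re] at h2
  rw [h2]
  have : ((1:ℝ):ℂ) = (1:ℂ) := Complex.ofReal_one
  rw [← G1_one, G1, this]

lemma integral_logsq_exp :
    ∫ t in Ioi (0:ℝ), (Real.log t)^2 * Real.exp (-t) = π^2/6 + γ^2 := by
  have h1 : deriv (deriv Complex.Gamma) 1 = mellin hC 1 :=
    hasDerivAt_deriv_cGamma.deriv
  have h2 : ((∫ t in Ioi (0:ℝ), (Real.log t)^2 * Real.exp (-t) : ℝ) : ℂ).re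
      = (deriv (deriv Complex.Gamma) 1).re := by rw [h1, mellin_hC_one]
  rw [Complex.ofReal_re] at h2
  rw [h2]
  have hone : ((1:ℝ):ℂ) = (1:ℂ) := Complex.ofReal_one
  have : (deriv (deriv Complex.Gamma) 1).re = G2 1 := by rw [G2, hone]
  rw [this, G2_one, psi'_one]

noncomputable def nnpdf : ℝ → ℝ≥0 := fun x => Real.toNNReal (exponentialPDFReal 1 x)

lemma nnpdf_meas : Measurable nnpdf := (measurable_exponentialPDFReal 1).real_toNNReal

lemma expMeasure_eq : expMeasure 1 = volume.withDensity (fun x => (nnpdf x : ℝ≥0∞)) := rfl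

lemma coe_nnpdf (x : ℝ) : (nnpdf x : ℝ) = if 0 ≤ x then Real.exp (-x) else 0 := by
  rw [nnpdf, Real.coe_toNNReal']
  rw [exponentialPDFReal, gammaPDFReal]
  split_ifs with h
  · rw [one_rpow, Real.Gamma_one, sub_self, Real.rpow_zero, one_mul]
    simp only [div_one, one_mul]
    exact max_eq_left (Real.exp_nonneg _)
  · simp

lemma smul_eq_indicator (g : ℝ → ℝ) :
    (fun x => nnpdf x • g x) = Set.indicator (Ici (0:ℝ)) (fun x => g x * Real.exp (-x)) := by
  funext x
  rw [NNReal.smul_def, smul_eq_mul, coe_nnpdf]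
  by_cases h : 0 ≤ x
  · rw [if_pos h, Set.indicator_of_mem (Set.mem_Ici.mpr h), mul_comm]
  · rw [if_neg h, Set.indicator_of_notMem (by simpa using h), zero_mul]

lemma integral_expMeasure (g : ℝ → ℝ) :
    ∫ x, g x ∂(expMeasure 1) = ∫ x in Ioi (0:ℝ), g x * Real.exp (-x) := by
  rw [expMeasure_eq, integral_withDensity_eq_integral_smul nnpdf_meas]
  rw [show (fun x => nnpdf x • g x) = Set.indicator (Ici (0:ℝ)) (fun x => g x * Real.exp (-x))
    from smul_eq_indicator g]
  rw [integral_indicator measurableSet_Ici, ← integral_Ici_eq_integral_Ioi]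

lemma integrable_expMeasure (g : ℝ → ℝ)
    (hg : IntegrableOn (fun x => g x * Real.exp (-x)) (Ioi (0:ℝ))) :
    Integrable g (expMeasure 1) := by
  rw [expMeasure_eq]
  have h1 : (fun x : ℝ => (nnpdf x : ℝ≥0∞)) = fun x => ((nnpdf x : ℝ≥0) : ℝ≥0∞) := rfl
  rw [integrable_withDensity_iff_integrable_smul nnpdf_meas]
  rw [show (fun x => nnpdf x • g x) = Set.indicator (Ici (0:ℝ)) (fun x => g x * Real.exp (-x))
    from smul_eq_indicator g]
  refine (IntegrableOn.integrable_indicator ?_ measurableSet_Ici)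
  rwa [integrableOn_Ici_iff_integrableOn_Ioi]

end aux

local notation "γ" => Real.eulerMascheroniConstant
open Set in
theorem variance_log_exponential
    {Ω : Type*} [MeasurableSpace Ω] (μ : Measure Ω) [IsProbabilityMeasure μ]
    (X : Ω → ℝ) (hXm : Measurable X)
    (hX : Measure.map X μ = expMeasure 1) :
    ProbabilityTheory.variance (fun ω => Real.log (X ω)) μ = π ^ 2 / 6 := by
  have hlogm : Measurable Real.log := Real.measurable_log
  have hI1 : IntegrableOn (fun t => Real.log t * Real.exp (-t)) (Ioi (0:ℝ)) :=
    integrableOn_log_exp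
  have hI2 : IntegrableOn (fun t => (Real.log t)^2 * Real.exp (-t)) (Ioi (0:ℝ)) :=
    integrableOn_logsq_exp
  have hv1 : ∫ t in Ioi (0:ℝ), Real.log t * Real.exp (-t) = -γ := integral_log_exp
  have hv2 : ∫ t in Ioi (0:ℝ), (Real.log t)^2 * Real.exp (-t) = π^2/6 + γ^2 :=
    integral_logsq_exp
  have hmemexp : MemLp Real.log 2 (expMeasure 1) := by
    have hsq : Integrable (fun x => Real.log x ^ 2) (expMeasure 1) :=
      integrable_expMeasure _ hI2
    exact (memLp_two_iff_integrable_sq hlogm.aestronglyMeasurable).mpr hsq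
  have hmem : MemLp (fun ω => Real.log (X ω)) 2 μ := by
    have h := (memLp_map_measure_iff
      (by rw [hX]; exact hlogm.aestronglyMeasurable) hXm.aemeasurable).mp
      (by rw [hX]; exact hmemexp)
    exact h
  have hEY : ∫ ω, Real.log (X ω) ∂μ = -γ := by
    have := integral_map hXm.aemeasurable
      (f := Real.log) (by rw [hX]; exact hlogm.aestronglyMeasurable)
    rw [show (fun ω => Real.log (X ω)) = fun ω => Real.log (X ω) from rfl]
    rw [← this, hX, integral_expMeasure, hv1]
  have hEY2 : ∫ ω, (Real.log (X ω))^2 ∂μ = π^2/6 + γ^2 := by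
    have := integral_map hXm.aemeasurable
      (f := fun x => Real.log x ^ 2) (by rw [hX]; exact (hlogm.pow_const 2).aestronglyMeasurable)
    rw [← hv2, ← integral_expMeasure, ← hX, ← this]
  rw [variance_eq_sub hmem]
  have h1 : μ[(fun ω => Real.log (X ω)) ^ 2] = π^2/6 + γ^2 := by
    rw [← hEY2]; congr 1
  have h2 : μ[fun ω => Real.log (X ω)] = -γ := hEY
  rw [h1, h2]
  ring
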